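/- Let M be a compact Hausdorff smooth (C^∞) manifold without boundary, modeled on a finite-dimensional real normed vector space, and let I : M → M be a smooth map satisfying I ∘ I = id and I x ≠ x for all x ∈ M. Then there exist a natural number m and a map Φ : M → EuclideanSpace ℝ (Fin m) such that: Φ is smooth; Φ is a topological embedding; the manifold derivative of Φ is injective at every point of M; and Φ (I x) = - Φ x for all x ∈ M. In other words, any fixed-point-free smooth involution of a compact manifold can be realized as the restriction of the antipodal map of a Euclidean space to an embedded copy of the manifold. -/

import Mathlib

open Manifold

noncomputable section AuxStmt0

/-- Euclidean space abbreviation. -/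
abbrev AuxF (n : ℕ) : Type := EuclideanSpace ℝ (Fin n)

/-- The bilinear "outer product" map `β b a = (v ↦ ⟪b, v⟫ • a)`. -/
noncomputable def auxβ (n : ℕ) : AuxF n →L[ℝ] AuxF n →L[ℝ] (AuxF n →L[ℝ] AuxF n) :=
  (ContinuousLinearMap.smulRightL ℝ (AuxF n) (AuxF n)).comp (innerSL ℝ)

lemma auxβ_apply (n : ℕ) (b a v : AuxF n) :
    auxβ n b a v = (inner ℝ b v : ℝ) • a := rfl

lemma auxβ_eq_zero (n : ℕ) (b a : AuxF n) (ha : a ≠ 0) (h : auxβ n b a = 0) :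
    b = 0 := by
  have h1 : (inner ℝ b b : ℝ) • a = 0 := by
    have := congrArg (fun T : AuxF n →L[ℝ] AuxF n => T b) h
    simpa [auxβ_apply] using this
  rcases smul_eq_zero.1 h1 with h2 | h2
  · exact inner_self_eq_zero.1 h2
  · exact absurd h2 ha

/-- Difference of the two coordinates. -/
noncomputable def auxS (n : ℕ) : AuxF n × AuxF n →L[ℝ] AuxF n :=
  ContinuousLinearMap.fst ℝ (AuxF n) (AuxF n) - ContinuousLinearMap.snd ℝ (AuxF n) (AuxF n)

/-- Sum of the two coordinates. -/
noncomputable def auxP (n : ℕ) : AuxF n × AuxF n →L[ℝ] AuxF n :=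
  ContinuousLinearMap.fst ℝ (AuxF n) (AuxF n) + ContinuousLinearMap.snd ℝ (AuxF n) (AuxF n)

lemma auxS_apply (n : ℕ) (p : AuxF n × AuxF n) : auxS n p = p.1 - p.2 := rfl

lemma auxP_apply (n : ℕ) (p : AuxF n × AuxF n) : auxP n p = p.1 + p.2 := rfl

/-- The odd map realizing the swap as the antipodal map. -/
noncomputable def auxG (n : ℕ) : AuxF n × AuxF n → AuxF n × (AuxF n →L[ℝ] AuxF n) :=
  fun p => (auxS n p, auxβ n (auxP n p) (auxS n p))

/-- The derivative of `auxG`. -/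
noncomputable def auxDG (n : ℕ) (p : AuxF n × AuxF n) :
    AuxF n × AuxF n →L[ℝ] AuxF n × (AuxF n →L[ℝ] AuxF n) :=
  (auxS n).prod
    (((auxβ n).isBoundedBilinearMap.deriv (auxP n p, auxS n p)).comp
      ((auxP n).prod (auxS n)))

lemma auxG_hasFDerivAt (n : ℕ) (p : AuxF n × AuxF n) :
    HasFDerivAt (auxG n) (auxDG n p) p := by
  have h2 : HasFDerivAt (fun q : AuxF n × AuxF n => auxβ n (auxP n q) (auxS n q))
      (((auxβ n).isBoundedBilinearMap.deriv (auxP n p, auxS n p)).comp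
        ((auxP n).prod (auxS n))) p := by
    have heq : (fun q : AuxF n × AuxF n => auxβ n (auxP n q) (auxS n q)) =
        (fun r : AuxF n × AuxF n => auxβ n r.1 r.2) ∘
          fun q : AuxF n × AuxF n => (auxP n q, auxS n q) := rfl
    rw [heq]
    exact ((auxβ n).isBoundedBilinearMap.hasFDerivAt (auxP n p, auxS n p)).comp p
      (((auxP n).prod (auxS n)).hasFDerivAt)
  exact ((auxS n).hasFDerivAt).prodMk h2

lemma auxG_contDiff (n : ℕ) : ContDiff ℝ ((⊤ : ℕ∞) : WithTop ℕ∞) (auxG n) := by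
  unfold auxG
  apply ContDiff.prodMk
  · exact (auxS n).contDiff
  · have hβ : ContDiff ℝ ((⊤ : ℕ∞) : WithTop ℕ∞) (fun x : AuxF n × AuxF n => auxβ n (auxP n x)) :=
      by fun_prop
    exact ContDiff.clm_apply hβ ((auxS n).contDiff)

lemma two_smul_cancel {V : Type*} [AddCommGroup V] [Module ℝ V] {a b : V}
    (h : a + a = b + b) : a = b := by
  have h2 : (2 : ℝ) • a = (2 : ℝ) • b := by rw [two_smul, two_smul]; exact h
  exact smul_right_injective V two_ne_zero h2

lemma auxG_inj (n : ℕ) {u v u' v' : AuxF n} (hne : u ≠ v)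
    (h : auxG n (u, v) = auxG n (u', v')) : u = u' := by
  have hS : u - v = u' - v' := congrArg Prod.fst h
  have hB : auxβ n (u + v) (u - v) = auxβ n (u' + v') (u' - v') := by
    have := congrArg Prod.snd h
    simpa [auxG, auxS_apply, auxP_apply] using this
  rw [← hS] at hB
  have hP0 : (u + v) - (u' + v') = 0 := by
    apply auxβ_eq_zero n _ _ (sub_ne_zero.2 hne)
    rw [map_sub (auxβ n) (u + v) (u' + v'), ContinuousLinearMap.sub_apply, hB,
      sub_self]
  have hP : u + v = u' + v' := sub_eq_zero.1 hP0
  apply two_smul_cancel (a := u) (b := u')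
  calc u + u = (u + v) + (u - v) := by abel
    _ = (u' + v') + (u' - v') := by rw [hP, hS]
    _ = u' + u' := by abel

lemma auxG_neg (n : ℕ) (u v : AuxF n) : auxG n (v, u) = - auxG n (u, v) := by
  have h1 : auxS n (v, u) = -(auxS n (u, v)) := by
    rw [auxS_apply, auxS_apply]; abel
  have h2 : auxP n (v, u) = auxP n (u, v) := by
    rw [auxP_apply, auxP_apply]; abel
  simp only [auxG, h1, h2, map_neg]
  rfl

lemma auxDG_fst_eq_zero (n : ℕ) (p : AuxF n × AuxF n) (hp : auxS n p ≠ 0)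
    (w : AuxF n × AuxF n) (h : auxDG n p w = 0) : w.1 = 0 := by
  have hS0 : auxS n w = 0 := congrArg Prod.fst h
  have hB0 : (auxβ n).isBoundedBilinearMap.deriv (auxP n p, auxS n p)
      (auxP n w, auxS n w) = 0 := congrArg Prod.snd h
  rw [(auxβ n).isBoundedBilinearMap.deriv_apply] at hB0
  rw [hS0, map_zero, zero_add] at hB0
  have hP0 : auxP n w = 0 := auxβ_eq_zero n _ _ hp hB0
  rw [auxS_apply] at hS0
  rw [auxP_apply] at hP0
  apply two_smul_cancel (a := w.1) (b := (0 : AuxF n))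
  calc w.1 + w.1 = (w.1 - w.2) + (w.1 + w.2) := by abel
    _ = 0 + 0 := by rw [hS0, hP0]

end AuxStmt0

/-- Any fixed-point-free smooth involution of a compact manifold can be realized as
the restriction of the antipodal map of a Euclidean space: there is a smooth embedding
`Φ` of `M` into some Euclidean space, which is moreover an immersion, such that
`Φ ∘ I = -Φ`. -/
theorem stmt_0 {E : Type*} [NormedAddCommGroup E] [NormedSpace ℝ E]
    [FiniteDimensional ℝ E]
    {M : Type*} [TopologicalSpace M] [ChartedSpace E M]
    [IsManifold 𝓘(ℝ, E) (⊤ : ℕ∞) M] [CompactSpace M] [T2Space M]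
    (I : M → M) (hI : ContMDiff 𝓘(ℝ, E) 𝓘(ℝ, E) (⊤ : ℕ∞) I)
    (hinv : I ∘ I = id) (hfix : ∀ x, I x ≠ x) :
    ∃ (m : ℕ) (Φ : M → EuclideanSpace ℝ (Fin m)),
      ContMDiff 𝓘(ℝ, E) 𝓘(ℝ, EuclideanSpace ℝ (Fin m)) (⊤ : ℕ∞) Φ ∧
      Topology.IsEmbedding Φ ∧
      (∀ x : M, Function.Injective
        (mfderiv 𝓘(ℝ, E) 𝓘(ℝ, EuclideanSpace ℝ (Fin m)) Φ x)) ∧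
      ∀ x : M, Φ (I x) = - Φ x := by
  classical
  obtain ⟨n, ψ, hψs, hψe, hψd⟩ :=
    exists_embedding_euclidean_of_compact (I := 𝓘(ℝ, E)) (M := M)
  have hψinj : Function.Injective ψ := hψe.injective
  have hψne : ∀ x : M, ψ x ≠ ψ (I x) := by
    intro x h
    exact hfix x (hψinj h).symm
  set m : ℕ := Module.finrank ℝ (AuxF n × (AuxF n →L[ℝ] AuxF n)) with hm
  set L : (AuxF n × (AuxF n →L[ℝ] AuxF n)) ≃L[ℝ] EuclideanSpace ℝ (Fin m) :=
    toEuclidean with hLdef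
  refine ⟨m, fun x => L (auxG n (ψ x, ψ (I x))), ?_, ?_, ?_, ?_⟩
  · -- smoothness
    have hg : ContMDiff 𝓘(ℝ, E) 𝓘(ℝ, AuxF n × AuxF n) ((⊤ : ℕ∞) : WithTop ℕ∞)
        (fun x : M => (ψ x, ψ (I x))) := hψs.prodMk_space (hψs.comp hI)
    have hK : ContDiff ℝ ((⊤ : ℕ∞) : WithTop ℕ∞) (fun p : AuxF n × AuxF n => L (auxG n p)) :=
      (L : (AuxF n × (AuxF n →L[ℝ] AuxF n)) →L[ℝ] EuclideanSpace ℝ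
        (Fin m)).contDiff.comp (auxG_contDiff n)
    exact hK.comp_contMDiff (g := fun p : AuxF n × AuxF n => L (auxG n p))
      (f := fun x : M => (ψ x, ψ (I x))) hg
  · -- embedding
    have hg : ContMDiff 𝓘(ℝ, E) 𝓘(ℝ, AuxF n × AuxF n) ((⊤ : ℕ∞) : WithTop ℕ∞)
        (fun x : M => (ψ x, ψ (I x))) := hψs.prodMk_space (hψs.comp hI)
    have hK : ContDiff ℝ ((⊤ : ℕ∞) : WithTop ℕ∞) (fun p : AuxF n × AuxF n => L (auxG n p)) :=
      (L : (AuxF n × (AuxF n →L[ℝ] AuxF n)) →L[ℝ] EuclideanSpace ℝ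
        (Fin m)).contDiff.comp (auxG_contDiff n)
    have hcont : Continuous (fun x : M => L (auxG n (ψ x, ψ (I x)))) :=
      (hK.comp_contMDiff (g := fun p : AuxF n × AuxF n => L (auxG n p))
        (f := fun x : M => (ψ x, ψ (I x))) hg).continuous
    have hinj : Function.Injective (fun x : M => L (auxG n (ψ x, ψ (I x)))) := by
      intro x y h
      have h' : auxG n (ψ x, ψ (I x)) = auxG n (ψ y, ψ (I y)) := L.injective h
      exact hψinj (auxG_inj n (hψne x) h')
    exact (hcont.isClosedEmbedding hinj).isEmbedding
  · -- immersion
    intro x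
    have hg : ContMDiff 𝓘(ℝ, E) 𝓘(ℝ, AuxF n × AuxF n) ((⊤ : ℕ∞) : WithTop ℕ∞)
        (fun x : M => (ψ x, ψ (I x))) := hψs.prodMk_space (hψs.comp hI)
    have hgd : MDifferentiableAt 𝓘(ℝ, E) 𝓘(ℝ, AuxF n × AuxF n)
        (fun x : M => (ψ x, ψ (I x))) x := hg.mdifferentiableAt (by simp)
    have hKd : HasFDerivAt (fun p : AuxF n × AuxF n => L (auxG n p))
        ((L : (AuxF n × (AuxF n →L[ℝ] AuxF n)) →L[ℝ] EuclideanSpace ℝ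
          (Fin m)).comp (auxDG n (ψ x, ψ (I x)))) (ψ x, ψ (I x)) :=
      ((L : (AuxF n × (AuxF n →L[ℝ] AuxF n)) →L[ℝ] EuclideanSpace ℝ
          (Fin m)).hasFDerivAt).comp _ (auxG_hasFDerivAt n (ψ x, ψ (I x)))
    have hΦmf : mfderiv 𝓘(ℝ, E) 𝓘(ℝ, EuclideanSpace ℝ (Fin m))
        (fun x : M => L (auxG n (ψ x, ψ (I x)))) x =
        (((L : (AuxF n × (AuxF n →L[ℝ] AuxF n)) →L[ℝ] EuclideanSpace ℝ
          (Fin m)).comp (auxDG n (ψ x, ψ (I x)))).comp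
          (mfderiv 𝓘(ℝ, E) 𝓘(ℝ, AuxF n × AuxF n)
            (fun x : M => (ψ x, ψ (I x))) x)) := by
      have heq : (fun x : M => L (auxG n (ψ x, ψ (I x)))) =
          (fun p : AuxF n × AuxF n => L (auxG n p)) ∘
            (fun x : M => (ψ x, ψ (I x))) := rfl
      rw [heq, mfderiv_comp (x := x) hKd.differentiableAt.mdifferentiableAt hgd,
        mfderiv_eq_fderiv, hKd.fderiv]
      rfl
    have hψmf : mfderiv 𝓘(ℝ, E) 𝓘(ℝ, AuxF n) ψ x =
        (ContinuousLinearMap.fst ℝ (AuxF n) (AuxF n)).comp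
          (mfderiv 𝓘(ℝ, E) 𝓘(ℝ, AuxF n × AuxF n)
            (fun x : M => (ψ x, ψ (I x))) x) := by
      have heq : ψ = ⇑(ContinuousLinearMap.fst ℝ (AuxF n) (AuxF n)) ∘
          (fun x : M => (ψ x, ψ (I x))) := rfl
      conv_lhs => rw [heq]
      rw [mfderiv_comp (x := x)
        ((ContinuousLinearMap.fst ℝ (AuxF n) (AuxF n)).hasMFDerivAt.mdifferentiableAt)
        hgd, (ContinuousLinearMap.fst ℝ (AuxF n) (AuxF n)).hasMFDerivAt.mfderiv]
      rfl
    have key : ∀ w, mfderiv 𝓘(ℝ, E) 𝓘(ℝ, EuclideanSpace ℝ (Fin m))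
        (fun x : M => L (auxG n (ψ x, ψ (I x)))) x w = 0 → w = 0 := by
      intro w hw
      rw [hΦmf] at hw
      set w' := mfderiv 𝓘(ℝ, E) 𝓘(ℝ, AuxF n × AuxF n)
        (fun x : M => (ψ x, ψ (I x))) x w with hw'
      have hDG0 : auxDG n (ψ x, ψ (I x)) w' = 0 := by
        apply L.injective
        rw [map_zero]
        exact hw
      have hSp : auxS n (ψ x, ψ (I x)) ≠ 0 := by
        rw [auxS_apply]
        exact sub_ne_zero.2 (hψne x)
      have hfst : w'.1 = 0 := auxDG_fst_eq_zero n _ hSp w' hDG0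
      have hψ0 : mfderiv 𝓘(ℝ, E) 𝓘(ℝ, AuxF n) ψ x w = 0 := by
        rw [hψmf]
        exact hfst
      exact hψd x (by rw [hψ0, map_zero])
    intro a b hab
    have := key (a - b) (by rw [map_sub, hab, sub_self])
    exact sub_eq_zero.1 this
  · -- equivariance
    intro x
    have hIIx : I (I x) = x := congrFun hinv x
    show L (auxG n (ψ (I x), ψ (I (I x)))) = - L (auxG n (ψ x, ψ (I x)))
    rw [hIIx, auxG_neg n, map_neg]
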